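/- Assume the stability condition P > xQ and fix s_Σ ≤ 2. Set ŝ = 2x·s_Σ + 2, r̂ = N and α = N(−2 + s_Σ·x)/(2Q·k₂²), and let (d₀, d₁) be the unique pair of reals such that ψ(t₋) = ψ(t₊) = 0. Then ψ(t) > 0 for every t ∈ (t₋, t₊). -/

import Mathlib

open Set Filter

set_option maxHeartbeats 4000000


lemma rolle_key (g g1 g2 g3 : ℝ → ℝ) (a b : ℝ) (hab : a < b)
    (hg : ∀ t ∈ Set.Icc a b, HasDerivAt g (g1 t) t)
    (hg1 : ∀ t ∈ Set.Icc a b, HasDerivAt g1 (g2 t) t)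
    (hg2 : ∀ t ∈ Set.Icc a b, HasDerivAt g2 (g3 t) t)
    (hg3mono : MonotoneOn g3 (Set.Icc a b))
    (ha : g a = 0) (hb : g b = 0) (ha' : 0 < g1 a) (hb' : g1 b < 0) :
    ∀ t ∈ Set.Ioo a b, 0 < g t := by
  by_contra hcon
  push_neg at hcon
  obtain ⟨t0, ht0, ht0le⟩ := hcon
  have contg : ∀ (u v : ℝ), a ≤ u → v ≤ b → ContinuousOn g (Set.Icc u v) :=
    fun u v hu hv => fun t ht =>
      ((hg t ⟨le_trans hu ht.1, le_trans ht.2 hv⟩).continuousAt).continuousWithinAt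
  have contg1 : ∀ (u v : ℝ), a ≤ u → v ≤ b → ContinuousOn g1 (Set.Icc u v) :=
    fun u v hu hv => fun t ht =>
      ((hg1 t ⟨le_trans hu ht.1, le_trans ht.2 hv⟩).continuousAt).continuousWithinAt
  have contg2 : ∀ (u v : ℝ), a ≤ u → v ≤ b → ContinuousOn g2 (Set.Icc u v) :=
    fun u v hu hv => fun t ht =>
      ((hg2 t ⟨le_trans hu ht.1, le_trans ht.2 hv⟩).continuousAt).continuousWithinAt
  -- point c1 ∈ (a, t0) with g c1 > 0
  have slope_a : Filter.Tendsto (slope g a) (nhdsWithin a (Set.Ioi a)) (nhds (g1 a)) := by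
    have h := hasDerivAt_iff_tendsto_slope.1 (hg a ⟨le_refl a, hab.le⟩)
    exact h.mono_left (nhdsWithin_mono a (fun y hy => hy.ne'))
  have slope_b : Filter.Tendsto (slope g b) (nhdsWithin b (Set.Iio b)) (nhds (g1 b)) := by
    have h := hasDerivAt_iff_tendsto_slope.1 (hg b ⟨hab.le, le_refl b⟩)
    exact h.mono_left (nhdsWithin_mono b (fun y hy => hy.ne))
  have ev1 : ∀ᶠ z in nhdsWithin a (Set.Ioi a), 0 < slope g a z :=
    slope_a.eventually (eventually_gt_nhds ha')
  have ev1' : ∀ᶠ z in nhdsWithin a (Set.Ioi a), z ∈ Set.Ioo a t0 :=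
    Ioo_mem_nhdsGT_of_mem ⟨le_refl a, ht0.1⟩
  obtain ⟨c1, hc1s, hc1m⟩ := (ev1.and ev1').exists
  rw [slope_def_field] at hc1s
  have hgc1 : 0 < g c1 := by
    have hda : 0 < c1 - a := by linarith [hc1m.1]
    rcases div_pos_iff.1 hc1s with ⟨h1, _⟩ | ⟨_, h2⟩
    · linarith
    · linarith
  have ev2 : ∀ᶠ z in nhdsWithin b (Set.Iio b), slope g b z < 0 :=
    slope_b.eventually (eventually_lt_nhds hb')
  have ev2' : ∀ᶠ z in nhdsWithin b (Set.Iio b), z ∈ Set.Ioo t0 b :=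
    Ioo_mem_nhdsLT_of_mem ⟨ht0.2, le_refl b⟩
  obtain ⟨c2, hc2s, hc2m⟩ := (ev2.and ev2').exists
  rw [slope_def_field] at hc2s
  have hgc2 : 0 < g c2 := by
    have hdb : c2 - b < 0 := by linarith [hc2m.2]
    rcases div_neg_iff.1 hc2s with ⟨h1, h2⟩ | ⟨h1, h2⟩
    · linarith
    · linarith
  -- MVT level 1 : p1 ∈ (c1,t0), p2 ∈ (t0,c2)
  obtain ⟨p1, hp1m, hp1⟩ := exists_hasDerivAt_eq_slope g g1 (show c1 < t0 from hc1m.2)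
    (contg c1 t0 hc1m.1.le (le_trans ht0.2.le (le_refl b)))
    (fun t ht => hg t ⟨le_trans hc1m.1.le ht.1.le, le_trans ht.2.le ht0.2.le⟩)
  obtain ⟨p2, hp2m, hp2⟩ := exists_hasDerivAt_eq_slope g g1 (show t0 < c2 from hc2m.1)
    (contg t0 c2 ht0.1.le hc2m.2.le)
    (fun t ht => hg t ⟨le_trans ht0.1.le ht.1.le, le_trans ht.2.le hc2m.2.le⟩)
  have hp1neg : g1 p1 < 0 := by
    rw [hp1]; apply div_neg_of_neg_of_pos <;> [skip; skip] <;> linarith [hc1m.2]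
  have hp2pos : 0 < g1 p2 := by
    rw [hp2]; apply div_pos <;> linarith [hc2m.1]
  -- interval facts
  have hap1 : a < p1 := lt_trans hc1m.1 hp1m.1
  have hp1b : p1 < b := lt_trans hp1m.2 ht0.2
  have hap2 : a < p2 := lt_trans ht0.1 hp2m.1
  have hp2b : p2 < b := lt_trans hp2m.2 hc2m.2
  have hp12 : p1 < p2 := lt_trans hp1m.2 hp2m.1
  -- MVT level 2 : q1 ∈ (a,p1), q2 ∈ (p1,p2), q3 ∈ (p2,b)
  obtain ⟨q1, hq1m, hq1⟩ := exists_hasDerivAt_eq_slope g1 g2 hap1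
    (contg1 a p1 (le_refl a) hp1b.le)
    (fun t ht => hg1 t ⟨ht.1.le, le_trans ht.2.le hp1b.le⟩)
  obtain ⟨q2, hq2m, hq2⟩ := exists_hasDerivAt_eq_slope g1 g2 hp12
    (contg1 p1 p2 hap1.le hp2b.le)
    (fun t ht => hg1 t ⟨le_trans hap1.le ht.1.le, le_trans ht.2.le hp2b.le⟩)
  obtain ⟨q3, hq3m, hq3⟩ := exists_hasDerivAt_eq_slope g1 g2 hp2b
    (contg1 p2 b hap2.le (le_refl b))
    (fun t ht => hg1 t ⟨le_trans hap2.le ht.1.le, ht.2.le⟩)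
  have hq1neg : g2 q1 < 0 := by
    rw [hq1]; apply div_neg_of_neg_of_pos <;> linarith
  have hq2pos : 0 < g2 q2 := by
    rw [hq2]; apply div_pos <;> linarith
  have hq3neg : g2 q3 < 0 := by
    rw [hq3]; apply div_neg_of_neg_of_pos <;> linarith
  have haq1 : a < q1 := hq1m.1
  have hq12 : q1 < q2 := lt_trans hq1m.2 hq2m.1
  have hq23 : q2 < q3 := lt_trans hq2m.2 hq3m.1
  have hq3b : q3 < b := hq3m.2
  -- MVT level 3 : r1 ∈ (q1,q2), r2 ∈ (q2,q3)
  obtain ⟨r1, hr1m, hr1⟩ := exists_hasDerivAt_eq_slope g2 g3 hq12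
    (contg2 q1 q2 haq1.le (le_trans hq23.le hq3b.le))
    (fun t ht => hg2 t ⟨le_trans haq1.le ht.1.le,
      le_trans ht.2.le (le_trans hq23.le hq3b.le)⟩)
  obtain ⟨r2, hr2m, hr2⟩ := exists_hasDerivAt_eq_slope g2 g3 hq23
    (contg2 q2 q3 (le_trans haq1.le hq12.le) hq3b.le)
    (fun t ht => hg2 t ⟨le_trans (le_trans haq1.le hq12.le) ht.1.le,
      le_trans ht.2.le hq3b.le⟩)
  have hr1pos : 0 < g3 r1 := by
    rw [hr1]; apply div_pos <;> linarith
  have hr2neg : g3 r2 < 0 := by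
    rw [hr2]; apply div_neg_of_neg_of_pos <;> linarith
  have hmono := hg3mono
    (show r1 ∈ Set.Icc a b from ⟨(lt_trans haq1 hr1m.1).le, (lt_trans hr1m.2 (lt_trans hq23 hq3b)).le⟩)
    (show r2 ∈ Set.Icc a b from ⟨(lt_trans haq1 (lt_trans hq12 hr2m.1)).le, (lt_trans hr2m.2 hq3b).le⟩)
    (show r1 ≤ r2 from (lt_trans hr1m.2 hr2m.1).le)
  linarith

lemma rpow32 {v : ℝ} (hv : 0 ≤ v) : v ^ ((3:ℝ)/2) = v * Real.sqrt v := by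
  rw [show ((3:ℝ)/2) = (1/2)*3 by norm_num, Real.rpow_mul hv, ← Real.sqrt_eq_rpow,
    show (3:ℝ) = ((3:ℕ):ℝ) by norm_num, Real.rpow_natCast]
  rw [pow_succ, pow_two, Real.mul_self_sqrt hv]

set_option maxHeartbeats 4000000
lemma sqrt_deriv {C t : ℝ} (h : 0 < t^2 + C) :
    HasDerivAt (fun t => Real.sqrt (t^2+C)) (t / Real.sqrt (t^2+C)) t := by
  have h1 : HasDerivAt (fun t : ℝ => t^2+C) (2*t) t := by
    simpa using ((hasDerivAt_pow 2 t).add_const C)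
  have h2 := (Real.hasDerivAt_sqrt h.ne').comp t h1
  refine h2.congr_deriv ?_
  have hs : Real.sqrt (t^2+C) ≠ 0 := (Real.sqrt_pos.2 h).ne'
  field_simp

/-- Positivity of the momentum function: under the stability condition and with the
smooth coupling constant, the solution `ψ` of the boundary value problem
`ψ(t₋) = ψ(t₊) = 0` is strictly positive on `(t₋, t₊)`. -/
theorem smooth_momentum_profile_positive
    (x k1 k2 θ N P Q C tm tp : ℝ)
    (hx : x ∈ Set.Ioo (0 : ℝ) 1) (hk1 : k1 < 0) (hk2 : k2 ≠ 0)
    (hθ : θ ∈ Set.Ioo 0 Real.pi)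
    (hN : N = Real.sqrt ((1 - k1 ^ 2 + k2 ^ 2) ^ 2 + 4 * k1 ^ 2))
    (hcos : Real.cos θ = (1 - k1 ^ 2 + k2 ^ 2) / N)
    (hsin : Real.sin θ = -(2 * k1) / N)
    (hP : P = 1 + (k1 + k2) ^ 2) (hQ : Q = 1 + (k1 - k2) ^ 2)
    (hC : C = 4 * k1 * k2 * (P - x ^ 2 * Q) / (x ^ 2 * N ^ 2))
    (htm : tm = (1 - x) / x) (htp : tp = (1 + x) / x)
    (hstab : P > x * Q)
    (sS : ℝ) (hsS : sS ≤ 2)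
    (shat rhat alpha : ℝ)
    (hshat : shat = 2 * x * sS + 2) (hrhat : rhat = N)
    (halpha : alpha = N * (-2 + sS * x) / (2 * Q * k2 ^ 2))
    (ψ : ℝ → ℝ → ℝ → ℝ)
    (hψ : ψ = fun d0 d1 t => sS * t ^ 2
      + (alpha * Real.cos θ / (3 * Real.sin θ ^ 2) - (shat - alpha * rhat) / 6) * t ^ 3
      - (alpha / 3) * Real.sin θ * ((Real.cot θ ^ 2 + 1) * (t ^ 2 + C)) ^ ((3 : ℝ) / 2)
      + d0 + d1 * t)
    (d0 d1 : ℝ)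
    (hbc0 : ψ d0 d1 tm = 0) (hbc1 : ψ d0 d1 tp = 0)
    (huniq : ∀ e0 e1 : ℝ, ψ e0 e1 tm = 0 → ψ e0 e1 tp = 0 → e0 = d0 ∧ e1 = d1) :
    ∀ t ∈ Set.Ioo tm tp, 0 < ψ d0 d1 t := by
  obtain ⟨hx0, hx1⟩ := hx
  have hxne : x ≠ 0 := hx0.ne'
  have hk1sq : 0 < k1^2 := by
    have := mul_pos (neg_pos.2 hk1) (neg_pos.2 hk1); nlinarith
  have hk2sq : 0 < k2^2 := by
    rcases hk2.lt_or_gt with h|h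
    · have := mul_pos (neg_pos.2 h) (neg_pos.2 h); nlinarith
    · have := mul_pos h h; nlinarith
  have hP0 : 0 < P := by rw [hP]; positivity
  have hQ0 : 0 < Q := by rw [hQ]; positivity
  have hN2 : N^2 = P*Q := by
    rw [hN, Real.sq_sqrt (by positivity), hP, hQ]; ring
  have hN0 : 0 < N := by
    rw [hN]
    apply Real.sqrt_pos.2
    have := sq_nonneg (1 - k1^2 + k2^2)
    linarith
  have hsin0 : 0 < Real.sin θ := Real.sin_pos_of_pos_of_lt_pi hθ.1 hθ.2
  have hsin' : Real.sin θ ≠ 0 := hsin0.ne'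
  have htm0 : 0 < tm := by rw [htm]; apply div_pos <;> linarith
  have htmtp : tp - tm = 2 := by rw [htm, htp]; field_simp; ring
  have htmtp' : tm < tp := by linarith
  have hPxQ : 0 < P - x*Q := by linarith
  have hPxQ' : 0 < P + x*Q := add_pos hP0 (mul_pos hx0 hQ0)
  have hsx : sS * x < 2 := by
    have h1 : sS*x ≤ 2*x := mul_le_mul_of_nonneg_right hsS hx0.le
    linarith
  have halpha0 : alpha ≤ 0 := by
    rw [halpha]
    apply div_nonpos_of_nonpos_of_nonneg
    · apply mul_nonpos_of_nonneg_of_nonpos hN0.le; linarith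
    · positivity
  obtain ⟨c, hcdef⟩ : ∃ y : ℝ, y = -alpha/(3*Real.sin θ^2) := ⟨_, rfl⟩
  obtain ⟨Bc, hBcdef⟩ : ∃ y : ℝ, y = alpha * Real.cos θ/(3*Real.sin θ^2) - (shat - alpha*rhat)/6 := ⟨_, rfl⟩
  have hc0 : 0 ≤ c := by
    rw [hcdef]; apply div_nonneg (by linarith) (by positivity)
  have hKcot : Real.cot θ^2 + 1 = 1/Real.sin θ^2 := by
    rw [Real.cot_eq_cos_div_sin, div_pow]
    field_simp
    exact Real.cos_sq_add_sin_sq θ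
  -- conversion : ψ in sqrt form
  have hψg : ∀ (e0 e1 t : ℝ), 0 ≤ t^2 + C →
      ψ e0 e1 t = sS*t^2 + Bc*t^3 + (c*Real.sqrt (t^2+C))*(t^2+C) + e0 + e1*t := by
    intro e0 e1 t ht
    simp only [hψ]
    have hbase : (Real.cot θ^2 + 1)*(t^2+C) = (t^2+C)/Real.sin θ^2 := by
      rw [hKcot]; ring
    rw [hbase, rpow32 (div_nonneg ht (by positivity)), Real.sqrt_div ht,
      Real.sqrt_sq hsin0.le, hcdef, hBcdef]
    field_simp
    ring
  -- square-root closed forms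
  have hum' : tm^2 + C = (P - x*Q)^2/(x^2*(P*Q)) := by
    rw [htm, hC, hN2, hP, hQ]; field_simp; ring
  have hup' : tp^2 + C = (P + x*Q)^2/(x^2*(P*Q)) := by
    rw [htp, hC, hN2, hP, hQ]; field_simp; ring
  have hsqm : tm^2 + C = ((P - x*Q)/(x*N))^2 := by
    rw [hum', div_pow, mul_pow, hN2]
  have hsqp : tp^2 + C = ((P + x*Q)/(x*N))^2 := by
    rw [hup', div_pow, mul_pow, hN2]
  have hrm : Real.sqrt (tm^2+C) = (P - x*Q)/(x*N) := by
    rw [hsqm, Real.sqrt_sq (by positivity)]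
  have hrp : Real.sqrt (tp^2+C) = (P + x*Q)/(x*N) := by
    rw [hsqp, Real.sqrt_sq (by positivity)]
  have hum0 : 0 < tm^2 + C := by
    rw [hum']; apply div_pos (by positivity) (by positivity)
  have hposIcc : ∀ t ∈ Set.Icc tm tp, 0 < t^2 + C := by
    intro t ht
    have h1 : tm ≤ t := ht.1
    have h2 : tm^2 ≤ t^2 := pow_le_pow_left₀ htm0.le h1 2
    linarith
  -- closed forms for the coefficients
  have hk1ne : k1 ≠ 0 := ne_of_lt hk1
  have hQne : Q ≠ 0 := hQ0.ne'
  have hNne : N ≠ 0 := hN0.ne'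
  have hc3 : c = (2-sS*x)*N*P/(24*k1^2*k2^2) := by
    rw [hcdef, halpha, hsin]
    field_simp [hk1ne, hk2, hQne, hNne]
    linear_combination (24*(2-sS*x)) * hN2
  have hcrm : c * Real.sqrt (tm^2+C) = P*(2-sS*x)*(P-x*Q)/(24*k1^2*k2^2*x) := by
    rw [hrm, hc3]; field_simp
  have hcrp : c * Real.sqrt (tp^2+C) = P*(2-sS*x)*(P+x*Q)/(24*k1^2*k2^2*x) := by
    rw [hrp, hc3]; field_simp
  have hBc3 : Bc = P*(sS*x-2)*(P+Q)/(48*k1^2*k2^2) - (2*x*sS+2)/6 := by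
    have hN2e : N^2 = (1+(k1+k2)^2)*(1+(k1-k2)^2) := by rw [hN2, hP, hQ]
    rw [hBcdef, halpha, hsin, hcos, hrhat, hshat, hP, hQ]
    field_simp [hk1ne, hk2, hQne, hNne]
    linear_combination (288*(sS*x-2)*(1+k1^2+k2^2)) * hN2e
  have hup0 : 0 < tp^2 + C := by
    rw [hup']; apply div_pos (by positivity) (by positivity)
  have hPene : (1+(k1+k2)^2) ≠ (0:ℝ) := by positivity
  have hQene : (1+(k1-k2)^2) ≠ (0:ℝ) := by positivity
  -- explicit boundary solution
  set umE : ℝ := (P - x*Q)^2/(x^2*(P*Q)) with humE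
  set upE : ℝ := (P + x*Q)^2/(x^2*(P*Q)) with hupE
  set crmE : ℝ := P*(2-sS*x)*(P-x*Q)/(24*k1^2*k2^2*x) with hcrmE
  set crpE : ℝ := P*(2-sS*x)*(P+x*Q)/(24*k1^2*k2^2*x) with hcrpE
  set BcE : ℝ := P*(sS*x-2)*(P+Q)/(48*k1^2*k2^2) - (2*x*sS+2)/6 with hBcE
  set FmE : ℝ := sS*tm^2 + BcE*tm^3 + crmE*umE with hFmE
  set FpE : ℝ := sS*tp^2 + BcE*tp^3 + crpE*upE with hFpE
  set D1 : ℝ := (FmE - FpE)/2 with hD1E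
  set D0 : ℝ := -FmE - D1*tm with hD0E
  have h0 : ψ D0 D1 tm = 0 := by
    rw [hψg _ _ _ hum0.le, hcrm, hum', hBc3, hD0E, hD1E, hFmE, hFpE, hBcE, hcrmE,
      hcrpE, humE, hupE, htm, htp, hP, hQ]
    field_simp
    ring
  have h1 : ψ D0 D1 tp = 0 := by
    rw [hψg _ _ _ hup0.le, hcrp, hup', hBc3, hD0E, hD1E, hFmE, hFpE, hBcE, hcrmE,
      hcrpE, humE, hupE, htm, htp, hP, hQ]
    field_simp
    ring
  obtain ⟨hd0eq, hd1eq⟩ := huniq D0 D1 h0 h1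
  have hG1tm : 2*sS*tm + 3*Bc*tm^2 + 3*(c*Real.sqrt (tm^2+C)*tm) + d1 = 2*tm := by
    rw [← hd1eq, hcrm, hBc3, hD1E, hFmE, hFpE, hBcE, hcrmE,
      hcrpE, humE, hupE, htm, htp, hP, hQ]
    field_simp
    ring
  have hG1tp : 2*sS*tp + 3*Bc*tp^2 + 3*(c*Real.sqrt (tp^2+C)*tp) + d1 = -(2*tp) := by
    rw [← hd1eq, hcrp, hBc3, hD1E, hFmE, hFpE, hBcE, hcrmE,
      hcrpE, humE, hupE, htm, htp, hP, hQ]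
    field_simp
    ring
  -- derivatives
  have hpow2 : ∀ t : ℝ, HasDerivAt (fun s : ℝ => s^2) (2*t) t := fun t => by
    simpa using hasDerivAt_pow 2 t
  have hpow3 : ∀ t : ℝ, HasDerivAt (fun s : ℝ => s^3) (3*t^2) t := fun t => by
    simpa using hasDerivAt_pow 3 t
  have hu' : ∀ t : ℝ, HasDerivAt (fun s : ℝ => s^2+C) (2*t) t :=
    fun t => (hpow2 t).add_const C
  have hrt : ∀ t : ℝ, 0 < t^2+C →
      HasDerivAt (fun s => Real.sqrt (s^2+C)) (t/Real.sqrt (t^2+C)) t :=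
    fun t ht => sqrt_deriv ht
  have hDg : ∀ t, 0 < t^2+C → HasDerivAt
      (fun s => sS*s^2 + Bc*s^3 + c*Real.sqrt (s^2+C)*(s^2+C) + d0 + d1*s)
      (2*sS*t + 3*Bc*t^2 + 3*(c*Real.sqrt (t^2+C)*t) + d1) t := by
    intro t ht
    have hs0 : (0:ℝ) < Real.sqrt (t^2+C) := Real.sqrt_pos.2 ht
    have hss : Real.sqrt (t^2+C) * Real.sqrt (t^2+C) = t^2+C := Real.mul_self_sqrt ht.le
    have h2 := (((((hpow2 t).const_mul sS).add ((hpow3 t).const_mul Bc)).add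
      ((((hrt t ht).const_mul c).mul (hu' t)))).add_const d0).add
      ((hasDerivAt_id t).const_mul d1)
    refine h2.congr_deriv ?_
    field_simp
    linear_combination (-(t*c))*hss
  have hDG1 : ∀ t, 0 < t^2+C → HasDerivAt
      (fun s => 2*sS*s + 3*Bc*s^2 + 3*(c*Real.sqrt (s^2+C)*s) + d1)
      (2*sS + 6*Bc*t + 3*c*((2*t^2+C)/Real.sqrt (t^2+C))) t := by
    intro t ht
    have hs0 : (0:ℝ) < Real.sqrt (t^2+C) := Real.sqrt_pos.2 ht
    have hss : Real.sqrt (t^2+C) * Real.sqrt (t^2+C) = t^2+C := Real.mul_self_sqrt ht.le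
    have h2 := (((((hasDerivAt_id t).const_mul (2*sS)).add ((hpow2 t).const_mul (3*Bc))).add
      (((((hrt t ht).const_mul c).mul (hasDerivAt_id t))).const_mul 3)).add_const d1)
    refine h2.congr_deriv ?_
    field_simp
    have hid : id t = t := rfl
    linear_combination (3*c)*hss + (3*t*c)*hid
  have hDG2 : ∀ t, 0 < t^2+C → HasDerivAt
      (fun s => 2*sS + 6*Bc*s + 3*c*((2*s^2+C)/Real.sqrt (s^2+C)))
      (6*Bc + 3*c*((2*t^3+3*C*t)/((t^2+C)*Real.sqrt (t^2+C)))) t := by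
    intro t ht
    have hs0 : (0:ℝ) < Real.sqrt (t^2+C) := Real.sqrt_pos.2 ht
    have hss : Real.sqrt (t^2+C) * Real.sqrt (t^2+C) = t^2+C := Real.mul_self_sqrt ht.le
    have hdiv := (((hpow2 t).const_mul 2).add_const C).div (hrt t ht) hs0.ne'
    have h2 := ((hasDerivAt_const t (2*sS)).add ((hasDerivAt_id t).const_mul (6*Bc))).add
      (hdiv.const_mul (3*c))
    refine h2.congr_deriv ?_
    field_simp
    linear_combination (3*t*C*c + 6*t^3*c)*hss
  have hDG3 : ∀ t, 0 < t^2+C → HasDerivAt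
      (fun s => 6*Bc + 3*c*((2*s^3+3*C*s)/((s^2+C)*Real.sqrt (s^2+C))))
      (9*c*C^2/((t^2+C)^2*Real.sqrt (t^2+C))) t := by
    intro t ht
    have hs0 : (0:ℝ) < Real.sqrt (t^2+C) := Real.sqrt_pos.2 ht
    have hss : Real.sqrt (t^2+C) * Real.sqrt (t^2+C) = t^2+C := Real.mul_self_sqrt ht.le
    have hden : (t^2+C)*Real.sqrt (t^2+C) ≠ 0 := (mul_pos ht hs0).ne'
    have hdiv := (((hpow3 t).const_mul 2).add ((hasDerivAt_id t).const_mul (3*C))).div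
      ((hu' t).mul (hrt t ht)) hden
    have h2 := (hdiv.const_mul (3*c)).const_add (6*Bc)
    refine h2.congr_deriv ?_
    simp only [id, Pi.add_apply, Pi.mul_apply]
    field_simp
    linear_combination (9*c*t^2*C + 6*c*t^4)*hss
  have htp0 : 0 < tp := by linarith
  have hmono : MonotoneOn (fun s => 6*Bc + 3*c*((2*s^3+3*C*s)/((s^2+C)*Real.sqrt (s^2+C))))
      (Set.Icc tm tp) := by
    apply monotoneOn_of_deriv_nonneg (convex_Icc tm tp)
    · intro t ht
      exact (hDG3 t (hposIcc t ht)).continuousAt.continuousWithinAt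
    · intro t ht
      rw [interior_Icc] at ht
      exact ((hDG3 t (hposIcc t (Set.Ioo_subset_Icc_self ht))).differentiableAt).differentiableWithinAt
    · intro t ht
      rw [interior_Icc] at ht
      rw [(hDG3 t (hposIcc t (Set.Ioo_subset_Icc_self ht))).deriv]
      apply div_nonneg
      · exact mul_nonneg (mul_nonneg (by norm_num) hc0) (sq_nonneg C)
      · positivity
  have main := rolle_key
    (fun s => sS*s^2 + Bc*s^3 + c*Real.sqrt (s^2+C)*(s^2+C) + d0 + d1*s)
    (fun s => 2*sS*s + 3*Bc*s^2 + 3*(c*Real.sqrt (s^2+C)*s) + d1)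
    (fun s => 2*sS + 6*Bc*s + 3*c*((2*s^2+C)/Real.sqrt (s^2+C)))
    (fun s => 6*Bc + 3*c*((2*s^3+3*C*s)/((s^2+C)*Real.sqrt (s^2+C))))
    tm tp htmtp'
    (fun t ht => hDg t (hposIcc t ht))
    (fun t ht => hDG1 t (hposIcc t ht))
    (fun t ht => hDG2 t (hposIcc t ht))
    hmono
    (by show sS*tm^2 + Bc*tm^3 + c*Real.sqrt (tm^2+C)*(tm^2+C) + d0 + d1*tm = 0
        rw [← hψg d0 d1 tm hum0.le]; exact hbc0)
    (by show sS*tp^2 + Bc*tp^3 + c*Real.sqrt (tp^2+C)*(tp^2+C) + d0 + d1*tp = 0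
        rw [← hψg d0 d1 tp hup0.le]; exact hbc1)
    (by show (0:ℝ) < 2*sS*tm + 3*Bc*tm^2 + 3*(c*Real.sqrt (tm^2+C)*tm) + d1
        rw [hG1tm]; linarith)
    (by show 2*sS*tp + 3*Bc*tp^2 + 3*(c*Real.sqrt (tp^2+C)*tp) + d1 < 0
        rw [hG1tp]; linarith)
  intro t ht
  rw [hψg d0 d1 t (hposIcc t (Set.Ioo_subset_Icc_self ht)).le]
  exact main t ht
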